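/- arXiv:1512.00781 — 2 statements merged into one kernel-verified Lean document; each statement's English description precedes it below -/
import Mathlib

section
/- For a cube Λ of side L in ℝ^d and R > 0, the hard-core configuration space satisfies the lower bound Z^hc_{n,Λ,R} ≥ (1/n!) ∏_{k=0}^{n-1} max(|Λ| - k·V_d(2R), 0), where V_d(r) is the volume of the d-dimensional ball of radius r. In particular if n·V_d(2R) ≤ |Λ|/2 then Z^hc_{n,Λ,R} ≥ (|Λ|/2)ⁿ/n!. -/
open MeasureTheory ENNReal

def hcConfig (d n : ℕ) (Λ : Set (EuclideanSpace ℝ (Fin d))) (R : ℝ) :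
    Set (Fin n → EuclideanSpace ℝ (Fin d)) :=
  {q | (∀ i, q i ∈ Λ) ∧ ∀ i j, i ≠ j → R < dist (q i) (q j)}

noncomputable def Zhc (d n : ℕ) (Λ : Set (EuclideanSpace ℝ (Fin d))) (R : ℝ) : ℝ :=
  (volume (hcConfig d n Λ R)).toReal / Nat.factorial n

/-- Volume of the `d`-dimensional Euclidean ball of radius `r`. -/
noncomputable def Vball (d : ℕ) (r : ℝ) : ℝ :=
  (volume (Metric.closedBall (0 : EuclideanSpace ℝ (Fin d)) r)).toReal

lemma measurableSet_hcConfig {d n : ℕ} {Λ : Set (EuclideanSpace ℝ (Fin d))} {R : ℝ}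
    (hΛ : MeasurableSet Λ) : MeasurableSet (hcConfig d n Λ R) := by
  have h1 : MeasurableSet {q : Fin n → EuclideanSpace ℝ (Fin d) | ∀ i, q i ∈ Λ} := by
    rw [Set.setOf_forall]
    exact MeasurableSet.iInter fun i => (measurable_pi_apply i) hΛ
  have h2 : MeasurableSet {q : Fin n → EuclideanSpace ℝ (Fin d) |
      ∀ i j, i ≠ j → R < dist (q i) (q j)} := by
    rw [Set.setOf_forall]
    refine MeasurableSet.iInter fun i => ?_
    rw [Set.setOf_forall]
    refine MeasurableSet.iInter fun j => ?_
    rcases eq_or_ne i j with rfl | hij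
    · convert MeasurableSet.univ
      ext q; simp
    · have he : {q : Fin n → EuclideanSpace ℝ (Fin d) | i ≠ j → R < dist (q i) (q j)}
          = {q | R < dist (q i) (q j)} := by ext q; simp [hij]
      rw [he]
      exact measurableSet_lt measurable_const
        ((continuous_apply i).dist (continuous_apply j)).measurable
  exact MeasurableSet.inter h1 h2

/-- Key ENNReal estimate by induction: sequential placement. -/
lemma hcConfig_volume_key {d : ℕ} (R : ℝ) (hR : 0 < R) (Λ : Set (EuclideanSpace ℝ (Fin d)))
    (hΛ : MeasurableSet Λ) (n : ℕ) :
    ∏ k ∈ Finset.range n,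
        (volume Λ - (k : ℝ≥0∞) * volume (Metric.closedBall (0 : EuclideanSpace ℝ (Fin d)) (2*R)))
      ≤ volume (hcConfig d n Λ R) := by
  induction n with
  | zero =>
      have huniv : hcConfig d 0 Λ R = Set.univ := by
        ext q
        exact ⟨fun _ => trivial, fun _ => ⟨fun i => i.elim0, fun i => i.elim0⟩⟩
      simp [huniv, volume_pi, Measure.pi_univ]
  | succ n ih =>
      set V : ℝ≥0∞ := volume (Metric.closedBall (0 : EuclideanSpace ℝ (Fin d)) (2*R)) with hV
      set e := MeasurableEquiv.piFinSuccAbove (fun _ : Fin (n+1) => EuclideanSpace ℝ (Fin d)) 0 with he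
      have hpres := measurePreserving_piFinSuccAbove (fun _ : Fin (n+1) => (volume : Measure (EuclideanSpace ℝ (Fin d)))) 0
      set T : Set (EuclideanSpace ℝ (Fin d) × (Fin n → EuclideanSpace ℝ (Fin d))) :=
        {p | p.2 ∈ hcConfig d n Λ R ∧ p.1 ∈ Λ ∧ ∀ i, R < dist p.1 (p.2 i)} with hT
      have hTm : MeasurableSet T := by
        have h1 : MeasurableSet {p : EuclideanSpace ℝ (Fin d) × (Fin n → EuclideanSpace ℝ (Fin d)) | p.2 ∈ hcConfig d n Λ R} :=
          measurable_snd (measurableSet_hcConfig hΛ)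
        have h2 : MeasurableSet {p : EuclideanSpace ℝ (Fin d) × (Fin n → EuclideanSpace ℝ (Fin d)) | p.1 ∈ Λ} := measurable_fst hΛ
        have h3 : MeasurableSet {p : EuclideanSpace ℝ (Fin d) × (Fin n → EuclideanSpace ℝ (Fin d)) | ∀ i, R < dist p.1 (p.2 i)} := by
          rw [Set.setOf_forall]
          refine MeasurableSet.iInter fun i => ?_
          exact measurableSet_lt measurable_const
            (continuous_fst.dist ((continuous_apply i).comp continuous_snd)).measurable
        exact h1.inter (h2.inter h3)
      have happ : ∀ q : Fin (n+1) → EuclideanSpace ℝ (Fin d), e q = (q 0, fun j => q j.succ) := by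
        intro q
        have : (fun j : Fin n => q ((0 : Fin (n+1)).succAbove j)) = fun j => q j.succ := by
          funext j; rw [Fin.succAbove_zero]
        simp only [he, MeasurableEquiv.piFinSuccAbove, Fin.insertNthEquiv, MeasurableEquiv.coe_mk, Equiv.coe_fn_symm_mk, this]
        exact Prod.ext rfl (funext fun j => rfl)
      have hset : hcConfig d (n+1) Λ R = e ⁻¹' T := by
        ext q
        simp only [Set.mem_preimage, happ, hT, Set.mem_setOf_eq, hcConfig]
        constructor
        · rintro ⟨hmem, hdist⟩
          refine ⟨⟨fun i => hmem i.succ, fun i j hij => hdist i.succ j.succ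
            (fun h => hij (Fin.succ_injective _ h))⟩, hmem 0, fun i =>
            hdist 0 i.succ (Fin.succ_ne_zero i).symm⟩
        · rintro ⟨⟨hmem, hdist⟩, h0, hd0⟩
          refine ⟨fun i => ?_, fun i j hij => ?_⟩
          · rcases Fin.eq_zero_or_eq_succ i with rfl | ⟨k, rfl⟩
            · exact h0
            · exact hmem k
          · rcases Fin.eq_zero_or_eq_succ i with rfl | ⟨k, rfl⟩
            · rcases Fin.eq_zero_or_eq_succ j with rfl | ⟨m, rfl⟩
              · exact absurd rfl hij
              · exact hd0 m
            · rcases Fin.eq_zero_or_eq_succ j with rfl | ⟨m, rfl⟩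
              · rw [dist_comm]; exact hd0 k
              · exact hdist k m (fun h => hij (by rw [h]))
      have hvol : volume (hcConfig d (n+1) Λ R)
          = ∫⁻ y, volume ((fun x => (x, y)) ⁻¹' T) := by
        rw [hset, volume_pi, hpres.measure_preimage hTm.nullMeasurableSet,
          Measure.prod_apply_symm hTm, ← volume_pi]
      rw [hvol]
      have hbound : ∀ y : Fin n → EuclideanSpace ℝ (Fin d),
          (hcConfig d n Λ R).indicator (fun _ => volume Λ - (n : ℝ≥0∞) * V) y
            ≤ volume ((fun x => (x, y)) ⁻¹' T) := by
        intro y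
        by_cases hy : y ∈ hcConfig d n Λ R
        · rw [Set.indicator_of_mem hy]
          have hsub : Λ \ (⋃ i, Metric.closedBall (y i) R) ⊆ (fun x => (x, y)) ⁻¹' T := by
            intro x hx
            refine ⟨hy, hx.1, fun i => ?_⟩
            have := hx.2
            simp only [Set.mem_iUnion, Metric.mem_closedBall, not_exists, not_le] at this
            exact this i
          refine le_trans ?_ (measure_mono hsub)
          have hU : volume (⋃ i, Metric.closedBall (y i) R) ≤ (n : ℝ≥0∞) * V := by
            refine le_trans (measure_iUnion_fintype_le _ _) ?_
            have hball : ∀ i : Fin n, volume (Metric.closedBall (y i) R) ≤ V := by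
              intro i
              rw [Measure.addHaar_closedBall_center]
              exact measure_mono (Metric.closedBall_subset_closedBall (by linarith))
            calc ∑ i : Fin n, volume (Metric.closedBall (y i) R)
                ≤ ∑ _i : Fin n, V := Finset.sum_le_sum fun i _ => hball i
              _ = (n : ℝ≥0∞) * V := by simp [mul_comm]
          have hΛle : volume Λ ≤ volume (Λ \ (⋃ i, Metric.closedBall (y i) R))
              + volume (⋃ i, Metric.closedBall (y i) R) := by
            refine le_trans (measure_mono ?_) (measure_union_le _ _)
            intro x hx
            by_cases hxU : x ∈ ⋃ i, Metric.closedBall (y i) R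
            · exact Or.inr hxU
            · exact Or.inl ⟨hx, hxU⟩
          rw [tsub_le_iff_right]
          calc volume Λ ≤ _ + _ := hΛle
            _ ≤ volume (Λ \ (⋃ i, Metric.closedBall (y i) R)) + (n : ℝ≥0∞) * V :=
              add_le_add_right hU _
        · rw [Set.indicator_of_notMem hy]
          exact zero_le
      calc ∏ k ∈ Finset.range (n+1), (volume Λ - (k : ℝ≥0∞) * V)
          = (∏ k ∈ Finset.range n, (volume Λ - (k : ℝ≥0∞) * V))
              * (volume Λ - (n : ℝ≥0∞) * V) := Finset.prod_range_succ _ _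
        _ ≤ volume (hcConfig d n Λ R) * (volume Λ - (n : ℝ≥0∞) * V) :=
            mul_le_mul_left ih _
        _ = (volume Λ - (n : ℝ≥0∞) * V) * volume (hcConfig d n Λ R) := mul_comm _ _
        _ = ∫⁻ y, (hcConfig d n Λ R).indicator (fun _ => volume Λ - (n : ℝ≥0∞) * V) y := by
            rw [lintegral_indicator (measurableSet_hcConfig hΛ), setLIntegral_const]
        _ ≤ ∫⁻ y, volume ((fun x => (x, y)) ⁻¹' T) := lintegral_mono hbound

/-- Lower bound for the hard-core partition function on a cube: sequential
placement of particles, each excluding volume at most `V_d(2R)`; in particular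
`Z^hc ≥ (|Λ|/2)ⁿ/n!` when `n·V_d(2R) ≤ |Λ|/2`. -/
theorem Zhc_lower_bound_cube
    (d n : ℕ) (R L : ℝ) (hR : 0 < R) (hL : 0 < L)
    (a : EuclideanSpace ℝ (Fin d))
    (Λ : Set (EuclideanSpace ℝ (Fin d)))
    (hΛ : Λ = {x | ∀ i, x i ∈ Set.Icc (a i) (a i + L)}) :
    ((∏ k ∈ Finset.range n,
        max ((volume Λ).toReal - k * Vball d (2 * R)) 0) / Nat.factorial n
      ≤ Zhc d n Λ R) ∧
    (n * Vball d (2 * R) ≤ (volume Λ).toReal / 2 →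
      ((volume Λ).toReal / 2) ^ n / Nat.factorial n ≤ Zhc d n Λ R) := by
  have hΛc : IsCompact Λ := by
    rw [hΛ]
    have hpre : {x : EuclideanSpace ℝ (Fin d) | ∀ i, x i ∈ Set.Icc (a i) (a i + L)}
        = ⇑(EuclideanSpace.equiv (Fin d) ℝ) ⁻¹'
            Set.univ.pi (fun i => Set.Icc (a i) (a i + L)) := by
      ext x; simp [Set.mem_univ_pi, Pi.le_def, forall_and]
    rw [hpre]
    exact (EuclideanSpace.equiv (Fin d) ℝ).toHomeomorph.isCompact_preimage.mpr
      (isCompact_univ_pi fun i => isCompact_Icc)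
  have hΛm : MeasurableSet Λ := hΛc.isClosed.measurableSet
  have hΛfin : volume Λ ≠ ⊤ := hΛc.measure_lt_top.ne
  set A := (volume Λ).toReal with hA
  set Vb := volume (Metric.closedBall (0 : EuclideanSpace ℝ (Fin d)) (2*R)) with hVb
  have hVbfin : Vb ≠ ⊤ := (isCompact_closedBall _ _).measure_lt_top.ne
  have hVbR : Vball d (2*R) = Vb.toReal := rfl
  have hVb0 : 0 ≤ Vball d (2*R) := ENNReal.toReal_nonneg
  have hofReal : ∀ k : ℕ, ENNReal.ofReal (max (A - k * Vball d (2*R)) 0)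
      = volume Λ - (k : ℝ≥0∞) * Vb := by
    intro k
    have hq : (0:ℝ) ≤ k * Vball d (2*R) := by positivity
    have h0 : ENNReal.ofReal (max (A - k * Vball d (2*R)) 0)
        = ENNReal.ofReal (A - k * Vball d (2*R)) := by
      rcases le_total (A - k * Vball d (2*R)) 0 with h | h
      · rw [max_eq_right h, ENNReal.ofReal_of_nonpos h, ENNReal.ofReal_zero]
      · rw [max_eq_left h]
    rw [h0, ENNReal.ofReal_sub _ hq, hA, ENNReal.ofReal_toReal hΛfin,
      ENNReal.ofReal_mul (by positivity), ENNReal.ofReal_natCast, hVbR,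
      ENNReal.ofReal_toReal hVbfin]
  have hkey := hcConfig_volume_key R hR Λ hΛm n
  have hprod : ENNReal.ofReal (∏ k ∈ Finset.range n, max (A - k * Vball d (2*R)) 0)
      = ∏ k ∈ Finset.range n, (volume Λ - (k : ℝ≥0∞) * Vb) := by
    rw [ENNReal.ofReal_prod_of_nonneg (fun i _ => le_max_right _ _)]
    exact Finset.prod_congr rfl fun k _ => hofReal k
  have hfin_hc : volume (hcConfig d n Λ R) ≠ ⊤ := by
    have hsub : hcConfig d n Λ R ⊆ Set.univ.pi (fun _ : Fin n => Λ) :=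
      fun q hq i _ => hq.1 i
    refine (lt_of_le_of_lt (measure_mono hsub) ?_).ne
    rw [volume_pi_pi]
    exact ENNReal.prod_lt_top fun i _ => hΛfin.lt_top
  have hmain : (∏ k ∈ Finset.range n, max (A - k * Vball d (2*R)) 0)
      ≤ (volume (hcConfig d n Λ R)).toReal := by
    have h := ENNReal.toReal_mono hfin_hc (hprod ▸ hkey)
    rwa [ENNReal.toReal_ofReal (Finset.prod_nonneg fun k _ => le_max_right _ _)] at h
  have hfact : (0:ℝ) < Nat.factorial n := by positivity
  have part1 : (∏ k ∈ Finset.range n, max (A - k * Vball d (2*R)) 0) / Nat.factorial n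
      ≤ Zhc d n Λ R := by
    unfold Zhc
    gcongr
  refine ⟨part1, fun hsmall => le_trans ?_ part1⟩
  have hA0 : 0 ≤ A := ENNReal.toReal_nonneg
  gcongr
  have hpow : (A/2)^n = ∏ _k ∈ Finset.range n, (A/2) := by
    rw [Finset.prod_const, Finset.card_range]
  rw [hpow]
  refine Finset.prod_le_prod (fun k _ => by positivity) (fun k hk => ?_)
  refine le_max_of_le_left ?_
  have hkn : (k:ℝ) * Vball d (2*R) ≤ n * Vball d (2*R) := by
    have : (k:ℝ) ≤ n := by exact_mod_cast (Finset.mem_range.mp hk).le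
    exact mul_le_mul_of_nonneg_right this hVb0
  linarith
end

section
/- (Dobrushin contraction for finitely many sites) Let X be a finite set and suppose for each x ∈ X the single-site Vaserstein distances satisfy R(p(·|n¹), p(·|n²)) ≤ Σ_{z≠x} r(x,z) d(n¹_z, n²_z) with sup_x Σ_z r(x,z) ≤ u < 1, where d(m,n) = |m-n| on ℕ. Then for any two Gibbs fields μ¹, μ² on ℕ^X with these conditional distributions and identical specifications, μ¹ = μ², i.e., the Gibbs field with such specification is unique. -/
open scoped BigOperators ENNReal

/-- Vaserstein distance on finitely supported probabilities on `ℕ`,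
w.r.t. the distance `d(m,n) = |m-n|`. -/
noncomputable def natVaserstein (p q : PMF ℕ) : ℝ≥0∞ :=
  sInf {s | ∃ Q : PMF (ℕ × ℕ),
    Q.map Prod.fst = p ∧ Q.map Prod.snd = q ∧
    s = ∑' mn : ℕ × ℕ, Q mn * (Nat.dist mn.1 mn.2 : ℝ≥0∞)}

/-- `μ` is a Gibbs field for the single-site specification `p`: at each site `x`
the conditional distribution of `η x` given the rest is `p x (η off x)`. -/
def IsGibbsField {X : Type*} [Fintype X] [DecidableEq X]
    (p : (x : X) → ({y : X // y ≠ x} → ℕ) → PMF ℕ)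
    (μ : PMF (X → ℕ)) : Prop :=
  ∀ (x : X) (η : X → ℕ),
    μ η = (∑' k : ℕ, μ (Function.update η x k)) *
      (p x (fun y => η y.1)) (η x)

open scoped NNReal

set_option linter.unusedSectionVars false

lemma exists_coupling (p q : PMF ℕ) (c : ℝ≥0∞) (hc : natVaserstein p q ≤ c)
    (ε : ℝ≥0∞) (hε : 0 < ε) :
    ∃ Q : PMF (ℕ × ℕ), Q.map Prod.fst = p ∧ Q.map Prod.snd = q ∧
      ∑' mn : ℕ × ℕ, Q mn * (Nat.dist mn.1 mn.2 : ℝ≥0∞) ≤ c + ε := by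
  by_cases hfin : c + ε = ⊤
  · -- independent coupling
    refine ⟨p.bind fun m => q.map fun n => (m, n), ?_, ?_, ?_⟩
    · rw [PMF.map_bind]
      simp [PMF.map_comp]
    · rw [PMF.map_bind]
      simp [PMF.map_comp]
      exact q.map_id
    · rw [hfin]; exact le_top
  · have hlt : natVaserstein p q < c + ε := lt_of_le_of_lt hc (by
      have : c < c + ε := ENNReal.lt_add_right (by rintro rfl; simp at hfin) hε.ne'
      exact this)
    obtain ⟨s, hs, hslt⟩ := sInf_lt_iff.mp hlt
    obtain ⟨Q, h1, h2, rfl⟩ := hs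
    exact ⟨Q, h1, h2, hslt.le⟩

/-- heat-bath update at site `x` -/
noncomputable def heatBathX {X : Type*} [Fintype X] [DecidableEq X]
    (p : (x : X) → ({y : X // y ≠ x} → ℕ) → PMF ℕ)
    (x : X) (η : X → ℕ) : PMF (X → ℕ) :=
  (p x (fun y => η y.1)).map (fun k => Function.update η x k)

lemma heatBathX_invariant {X : Type*} [Fintype X] [DecidableEq X]
    (p : (x : X) → ({y : X // y ≠ x} → ℕ) → PMF ℕ)
    (μ : PMF (X → ℕ)) (hμ : IsGibbsField p μ) (x : X) :
    μ.bind (heatBathX p x) = μ := by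
  ext η'
  rw [PMF.bind_apply]
  have hba : ∀ η : X → ℕ, (heatBathX p x η) η'
      = if η' = Function.update η x (η' x) then (p x (fun y => η y.1)) (η' x) else 0 := by
    intro η
    rw [heatBathX, PMF.map_apply]
    rw [tsum_eq_single (η' x)]
    · congr 1
    · intro k hk
      split
      · next h => exact absurd (by rw [h]; simp) hk
      · rfl
  simp only [hba]
  -- reparametrize η by m = η x, η = update η' x m when condition holds
  have hinj : Function.Injective (fun m => Function.update η' x m) := by
    intro a b hab
    have := congrFun hab x
    simpa using this
  rw [← Function.Injective.tsum_eq hinj ?_]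
  · -- sum over m of μ (update η' x m) * (p ...) (η' x)
    have heq : ∀ m : ℕ,
        μ (Function.update η' x m) *
          (if η' = Function.update (Function.update η' x m) x (η' x) then
            (p x (fun y => (Function.update η' x m) y.1)) (η' x) else 0)
        = μ (Function.update η' x m) * (p x (fun y => η' y.1)) (η' x) := by
      intro m
      have h1 : Function.update (Function.update η' x m) x (η' x) = η' := by
        funext y
        by_cases hy : y = x <;> simp [Function.update, hy]
      have h2 : (fun y : {y : X // y ≠ x} => (Function.update η' x m) y.1)
          = fun y : {y : X // y ≠ x} => η' y.1 := by
        funext y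
        exact Function.update_of_ne y.2 _ _
      rw [h1, h2]
      simp
    simp only [heq]
    rw [ENNReal.tsum_mul_right]
    exact (hμ x η').symm
  · -- support contained in range
    intro η hη
    rw [Function.mem_support] at hη
    have hcond : η' = Function.update η x (η' x) := by
      by_contra hc
      rw [if_neg hc, mul_zero] at hη
      exact hη rfl
    refine ⟨η x, ?_⟩
    funext y
    by_cases hy : y = x
    · subst hy; simp
    · have := congrFun hcond y
      simp [Function.update, hy] at this ⊢
      omega

noncomputable def pexp {α : Type*} (ν : PMF α) (f : α → ℝ≥0∞) : ℝ≥0∞ := ∑' a, ν a * f a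


lemma pexp_bind {α β : Type*} (ν : PMF α) (k : α → PMF β) (f : β → ℝ≥0∞) :
    pexp (ν.bind k) f = ∑' a, ν a * pexp (k a) f := by
  unfold pexp
  simp only [PMF.bind_apply]
  have : ∀ b : β, (∑' a, ν a * k a b) * f b = ∑' a, ν a * (k a b * f b) := by
    intro b
    rw [← ENNReal.tsum_mul_right]
    simp [mul_assoc]
  simp only [this]
  rw [ENNReal.tsum_comm]
  congr 1; funext a
  rw [ENNReal.tsum_mul_left]

lemma pexp_pure {α : Type*} (a : α) (f : α → ℝ≥0∞) : pexp (PMF.pure a) f = f a := by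
  unfold pexp
  rw [tsum_eq_single a]
  · simp
  · intro b hb; simp [PMF.pure_apply, hb]

lemma pexp_map {α β : Type*} (Q : PMF α) (g : α → β) (f : β → ℝ≥0∞) :
    pexp (Q.map g) f = pexp Q (f ∘ g) := by
  rw [PMF.map, pexp_bind]
  simp [pexp_pure]
  rfl

lemma pexp_mono {α : Type*} (ν : PMF α) {f g : α → ℝ≥0∞} (h : ∀ a, f a ≤ g a) :
    pexp ν f ≤ pexp ν g :=
  ENNReal.tsum_le_tsum fun a => mul_le_mul_right (h a) _

lemma pexp_const {α : Type*} (ν : PMF α) (c : ℝ≥0∞) : pexp ν (fun _ => c) = c := by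
  unfold pexp
  rw [ENNReal.tsum_mul_right, ν.tsum_coe, one_mul]

lemma pexp_le_one {α : Type*} (ν : PMF α) {f : α → ℝ≥0∞} (h : ∀ a, f a ≤ 1) :
    pexp ν f ≤ 1 := by
  calc pexp ν f ≤ pexp ν (fun _ => 1) := pexp_mono ν h
  _ = 1 := pexp_const ν 1

section
variable {X : Type*} [Fintype X] [DecidableEq X]

/-- coupled single-site update -/
noncomputable def stepK (C : (x : X) → ({y : X // y ≠ x} → ℕ) → ({y : X // y ≠ x} → ℕ) → PMF (ℕ × ℕ))
    (x : X) (σ : (X → ℕ) × (X → ℕ)) : PMF ((X → ℕ) × (X → ℕ)) :=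
  (C x (fun y => σ.1 y.1) (fun y => σ.2 y.1)).map
    (fun mn => (Function.update σ.1 x mn.1, Function.update σ.2 x mn.2))

noncomputable def sweepK (C : (x : X) → ({y : X // y ≠ x} → ℕ) → ({y : X // y ≠ x} → ℕ) → PMF (ℕ × ℕ)) :
    List X → ((X → ℕ) × (X → ℕ)) → PMF ((X → ℕ) × (X → ℕ))
  | [], σ => PMF.pure σ
  | x :: l, σ => (stepK C x σ).bind (sweepK C l)

/-- expected distance at site `z` -/
noncomputable def Adist (z : X) (ν : PMF ((X → ℕ) × (X → ℕ))) : ℝ≥0∞ :=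
  pexp ν (fun σ => (Nat.dist (σ.1 z) (σ.2 z) : ℝ≥0∞))

lemma bind_sweepK_cons (C : (x : X) → ({y : X // y ≠ x} → ℕ) → ({y : X // y ≠ x} → ℕ) → PMF (ℕ × ℕ))
    (x : X) (l : List X) (ν : PMF ((X → ℕ) × (X → ℕ))) :
    ν.bind (sweepK C (x :: l)) = (ν.bind (stepK C x)).bind (sweepK C l) := by
  rw [PMF.bind_bind]
  rfl

lemma bind_sweepK_nil (C : (x : X) → ({y : X // y ≠ x} → ℕ) → ({y : X // y ≠ x} → ℕ) → PMF (ℕ × ℕ))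
    (ν : PMF ((X → ℕ) × (X → ℕ))) :
    ν.bind (sweepK C []) = ν := by
  show ν.bind PMF.pure = ν
  exact PMF.bind_pure ν

end

section
set_option linter.unusedSectionVars false
variable {X : Type*} [Fintype X] [DecidableEq X]
  {p : (x : X) → ({y : X // y ≠ x} → ℕ) → PMF ℕ}
  {C : (x : X) → ({y : X // y ≠ x} → ℕ) → ({y : X // y ≠ x} → ℕ) → PMF (ℕ × ℕ)}

lemma stepK_map_fst (hC1 : ∀ x n₁ n₂, (C x n₁ n₂).map Prod.fst = p x n₁)
    (x : X) (σ : (X → ℕ) × (X → ℕ)) :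
    (stepK C x σ).map Prod.fst = heatBathX p x σ.1 := by
  rw [stepK, PMF.map_comp, heatBathX, ← hC1 x (fun y => σ.1 y.1) (fun y => σ.2 y.1), PMF.map_comp]
  rfl

lemma stepK_map_snd (hC2 : ∀ x n₁ n₂, (C x n₁ n₂).map Prod.snd = p x n₂)
    (x : X) (σ : (X → ℕ) × (X → ℕ)) :
    (stepK C x σ).map Prod.snd = heatBathX p x σ.2 := by
  rw [stepK, PMF.map_comp, heatBathX, ← hC2 x (fun y => σ.1 y.1) (fun y => σ.2 y.1), PMF.map_comp]
  rfl

lemma bind_stepK_map_fst (hC1 : ∀ x n₁ n₂, (C x n₁ n₂).map Prod.fst = p x n₁)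
    (x : X) {μ : PMF (X → ℕ)} (hinv : μ.bind (heatBathX p x) = μ)
    {ν : PMF ((X → ℕ) × (X → ℕ))} (hν : ν.map Prod.fst = μ) :
    (ν.bind (stepK C x)).map Prod.fst = μ := by
  rw [PMF.map_bind]
  simp only [stepK_map_fst hC1]
  rw [← hν] at hinv ⊢
  rw [PMF.bind_map] at hinv
  exact hinv

lemma bind_stepK_map_snd (hC2 : ∀ x n₁ n₂, (C x n₁ n₂).map Prod.snd = p x n₂)
    (x : X) {μ : PMF (X → ℕ)} (hinv : μ.bind (heatBathX p x) = μ)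
    {ν : PMF ((X → ℕ) × (X → ℕ))} (hν : ν.map Prod.snd = μ) :
    (ν.bind (stepK C x)).map Prod.snd = μ := by
  rw [PMF.map_bind]
  simp only [stepK_map_snd hC2]
  rw [← hν] at hinv ⊢
  rw [PMF.bind_map] at hinv
  exact hinv

end

section
set_option linter.unusedSectionVars false
variable {X : Type*} [Fintype X] [DecidableEq X]
  {p : (x : X) → ({y : X // y ≠ x} → ℕ) → PMF ℕ}
  {C : (x : X) → ({y : X // y ≠ x} → ℕ) → ({y : X // y ≠ x} → ℕ) → PMF (ℕ × ℕ)}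

lemma bind_sweepK_map_fst (hC1 : ∀ x n₁ n₂, (C x n₁ n₂).map Prod.fst = p x n₁)
    {μ : PMF (X → ℕ)} (hinv : ∀ x, μ.bind (heatBathX p x) = μ)
    (l : List X) :
    ∀ {ν : PMF ((X → ℕ) × (X → ℕ))}, ν.map Prod.fst = μ →
      (ν.bind (sweepK C l)).map Prod.fst = μ := by
  induction l with
  | nil => intro ν hν; rw [bind_sweepK_nil]; exact hν
  | cons x l ih =>
    intro ν hν
    rw [bind_sweepK_cons]
    exact ih (bind_stepK_map_fst hC1 x (hinv x) hν)

lemma bind_sweepK_map_snd (hC2 : ∀ x n₁ n₂, (C x n₁ n₂).map Prod.snd = p x n₂)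
    {μ : PMF (X → ℕ)} (hinv : ∀ x, μ.bind (heatBathX p x) = μ)
    (l : List X) :
    ∀ {ν : PMF ((X → ℕ) × (X → ℕ))}, ν.map Prod.snd = μ →
      (ν.bind (sweepK C l)).map Prod.snd = μ := by
  induction l with
  | nil => intro ν hν; rw [bind_sweepK_nil]; exact hν
  | cons x l ih =>
    intro ν hν
    rw [bind_sweepK_cons]
    exact ih (bind_stepK_map_snd hC2 x (hinv x) hν)

end

section
set_option linter.unusedSectionVars false
variable {X : Type*} [Fintype X] [DecidableEq X]
  {C : (x : X) → ({y : X // y ≠ x} → ℕ) → ({y : X // y ≠ x} → ℕ) → PMF (ℕ × ℕ)}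
  {r : X → X → ℝ≥0∞} {ε : ℝ≥0∞}

lemma Adist_pure (z : X) (σ : (X → ℕ) × (X → ℕ)) :
    Adist z (PMF.pure σ) = (Nat.dist (σ.1 z) (σ.2 z) : ℝ≥0∞) := by
  rw [Adist, pexp_pure]

lemma Adist_bind_step_ne (x z : X) (hz : z ≠ x) (ν : PMF ((X → ℕ) × (X → ℕ))) :
    Adist z (ν.bind (stepK C x)) = Adist z ν := by
  rw [Adist, pexp_bind]
  have : ∀ σ : (X → ℕ) × (X → ℕ),
      pexp (stepK C x σ) (fun τ => (Nat.dist (τ.1 z) (τ.2 z) : ℝ≥0∞))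
        = (Nat.dist (σ.1 z) (σ.2 z) : ℝ≥0∞) := by
    intro σ
    rw [stepK, pexp_map]
    have : (fun τ : (X → ℕ) × (X → ℕ) => (Nat.dist (τ.1 z) (τ.2 z) : ℝ≥0∞)) ∘
        (fun mn : ℕ × ℕ => (Function.update σ.1 x mn.1, Function.update σ.2 x mn.2))
        = fun _ => (Nat.dist (σ.1 z) (σ.2 z) : ℝ≥0∞) := by
      funext mn
      simp [Function.comp, Function.update_of_ne hz]
    rw [this, pexp_const]
  simp only [this]
  rfl

lemma Adist_bind_step_self
    (hCc : ∀ x n₁ n₂, ∑' mn : ℕ × ℕ, (C x n₁ n₂) mn * (Nat.dist mn.1 mn.2 : ℝ≥0∞) ≤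
      (∑ z : {y : X // y ≠ x}, r x z.1 * (Nat.dist (n₁ z) (n₂ z) : ℝ≥0∞)) + ε)
    (x : X) (ν : PMF ((X → ℕ) × (X → ℕ))) :
    Adist x (ν.bind (stepK C x)) ≤
      (∑ z : {y : X // y ≠ x}, r x z.1 * Adist z.1 ν) + ε := by
  rw [Adist, pexp_bind]
  have hstep : ∀ σ : (X → ℕ) × (X → ℕ),
      pexp (stepK C x σ) (fun τ => (Nat.dist (τ.1 x) (τ.2 x) : ℝ≥0∞)) ≤
        (∑ z : {y : X // y ≠ x}, r x z.1 * (Nat.dist (σ.1 z.1) (σ.2 z.1) : ℝ≥0∞)) + ε := by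
    intro σ
    rw [stepK, pexp_map]
    have heq : (fun τ : (X → ℕ) × (X → ℕ) => (Nat.dist (τ.1 x) (τ.2 x) : ℝ≥0∞)) ∘
        (fun mn : ℕ × ℕ => (Function.update σ.1 x mn.1, Function.update σ.2 x mn.2))
        = fun mn : ℕ × ℕ => (Nat.dist mn.1 mn.2 : ℝ≥0∞) := by
      funext mn
      simp [Function.comp]
    rw [heq]
    exact hCc x _ _
  calc ∑' σ, ν σ * pexp (stepK C x σ) (fun τ => (Nat.dist (τ.1 x) (τ.2 x) : ℝ≥0∞))
      ≤ ∑' σ, ν σ * ((∑ z : {y : X // y ≠ x}, r x z.1 * (Nat.dist (σ.1 z.1) (σ.2 z.1) : ℝ≥0∞)) + ε) :=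
        ENNReal.tsum_le_tsum fun σ => mul_le_mul_right (hstep σ) _
    _ = (∑ z : {y : X // y ≠ x}, r x z.1 * Adist z.1 ν) + ε := by
        simp only [mul_add]
        rw [Summable.tsum_add ENNReal.summable ENNReal.summable]
        congr 1
        · simp only [Finset.mul_sum]
          rw [Summable.tsum_finsetSum (fun _ _ => ENNReal.summable)]
          refine Finset.sum_congr rfl fun z _ => ?_
          rw [Adist, pexp, ← ENNReal.tsum_mul_left]
          congr 1; funext σ; ring
        · rw [ENNReal.tsum_mul_right, ν.tsum_coe, one_mul]
end

section
set_option linter.unusedSectionVars false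
variable {X : Type*} [Fintype X] [DecidableEq X]
  {C : (x : X) → ({y : X // y ≠ x} → ℕ) → ({y : X // y ≠ x} → ℕ) → PMF (ℕ × ℕ)}
  {r : X → X → ℝ≥0∞} {u ε : ℝ≥0∞}

lemma sweep_contract
    (hCc : ∀ x n₁ n₂, ∑' mn : ℕ × ℕ, (C x n₁ n₂) mn * (Nat.dist mn.1 mn.2 : ℝ≥0∞) ≤
      (∑ z : {y : X // y ≠ x}, r x z.1 * (Nat.dist (n₁ z) (n₂ z) : ℝ≥0∞)) + ε)
    (hr : ∀ x : X, (∑ z : {y : X // y ≠ x}, r x z.1) ≤ u)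
    (l : List X) :
    ∀ (ν : PMF ((X → ℕ) × (X → ℕ))) (B : ℝ≥0∞), u * B + ε ≤ B → (∀ z, Adist z ν ≤ B) →
      (∀ z, Adist z (ν.bind (sweepK C l)) ≤ B) ∧
      (∀ z ∈ l, Adist z (ν.bind (sweepK C l)) ≤ u * B + ε) ∧
      (∀ z ∉ l, Adist z (ν.bind (sweepK C l)) = Adist z ν) := by
  induction l with
  | nil =>
    intro ν B hB hA
    rw [bind_sweepK_nil]
    exact ⟨hA, by simp, fun _ _ => rfl⟩
  | cons x l ih =>
    intro ν B hB hA
    set ν' := ν.bind (stepK C x) with hν'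
    have hx' : Adist x ν' ≤ u * B + ε := by
      calc Adist x ν' ≤ (∑ z : {y : X // y ≠ x}, r x z.1 * Adist z.1 ν) + ε :=
            Adist_bind_step_self hCc x ν
        _ ≤ (∑ z : {y : X // y ≠ x}, r x z.1 * B) + ε := by
            gcongr with z
            exact hA z.1
        _ = (∑ z : {y : X // y ≠ x}, r x z.1) * B + ε := by rw [Finset.sum_mul]
        _ ≤ u * B + ε := by gcongr; exact hr x
    have hAll' : ∀ z, Adist z ν' ≤ B := by
      intro z
      by_cases hz : z = x
      · subst hz; exact hx'.trans hB
      · rw [Adist_bind_step_ne x z hz]; exact hA z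
    obtain ⟨h1, h2, h3⟩ := ih ν' B hB hAll'
    rw [bind_sweepK_cons, ← hν']
    refine ⟨h1, ?_, ?_⟩
    · intro z hz
      rcases List.mem_cons.mp hz with rfl | hzl
      · by_cases hxl : z ∈ l
        · exact h2 z hxl
        · rw [h3 z hxl]; exact hx'
      · exact h2 z hzl
    · intro z hz
      have hzx : z ≠ x := fun h => hz (h ▸ List.mem_cons_self)
      have hzl : z ∉ l := fun h => hz (List.mem_cons_of_mem x h)
      rw [h3 z hzl, hν', Adist_bind_step_ne x z hzx]
end

noncomputable def iterK {X : Type*} [Fintype X] [DecidableEq X]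
    (C : (x : X) → ({y : X // y ≠ x} → ℕ) → ({y : X // y ≠ x} → ℕ) → PMF (ℕ × ℕ))
    (L : List X) : ℕ → ((X → ℕ) × (X → ℕ)) → PMF ((X → ℕ) × (X → ℕ))
  | 0 => PMF.pure
  | n+1 => fun σ => (iterK C L n σ).bind (sweepK C L)

section
set_option linter.unusedSectionVars false
variable {X : Type*} [Fintype X] [DecidableEq X]
  {p : (x : X) → ({y : X // y ≠ x} → ℕ) → PMF ℕ}
  {C : (x : X) → ({y : X // y ≠ x} → ℕ) → ({y : X // y ≠ x} → ℕ) → PMF (ℕ × ℕ)}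
  {r : X → X → ℝ≥0∞} {u ε : ℝ≥0∞}

lemma bind_iterK_zero (L : List X) (ν : PMF ((X → ℕ) × (X → ℕ))) :
    ν.bind (iterK C L 0) = ν := PMF.bind_pure ν

lemma bind_iterK_succ (L : List X) (n : ℕ) (ν : PMF ((X → ℕ) × (X → ℕ))) :
    ν.bind (iterK C L (n + 1)) = (ν.bind (iterK C L n)).bind (sweepK C L) := by
  rw [PMF.bind_bind]
  rfl

lemma bind_iterK_map_fst (hC1 : ∀ x n₁ n₂, (C x n₁ n₂).map Prod.fst = p x n₁)
    {μ : PMF (X → ℕ)} (hinv : ∀ x, μ.bind (heatBathX p x) = μ)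
    (L : List X) (n : ℕ)
    {ν : PMF ((X → ℕ) × (X → ℕ))} (hν : ν.map Prod.fst = μ) :
    (ν.bind (iterK C L n)).map Prod.fst = μ := by
  induction n with
  | zero => rw [bind_iterK_zero]; exact hν
  | succ n ih => rw [bind_iterK_succ]; exact bind_sweepK_map_fst hC1 hinv L ih

lemma bind_iterK_map_snd (hC2 : ∀ x n₁ n₂, (C x n₁ n₂).map Prod.snd = p x n₂)
    {μ : PMF (X → ℕ)} (hinv : ∀ x, μ.bind (heatBathX p x) = μ)
    (L : List X) (n : ℕ)
    {ν : PMF ((X → ℕ) × (X → ℕ))} (hν : ν.map Prod.snd = μ) :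
    (ν.bind (iterK C L n)).map Prod.snd = μ := by
  induction n with
  | zero => rw [bind_iterK_zero]; exact hν
  | succ n ih => rw [bind_iterK_succ]; exact bind_sweepK_map_snd hC2 hinv L ih

lemma iter_contract
    (hCc : ∀ x n₁ n₂, ∑' mn : ℕ × ℕ, (C x n₁ n₂) mn * (Nat.dist mn.1 mn.2 : ℝ≥0∞) ≤
      (∑ z : {y : X // y ≠ x}, r x z.1 * (Nat.dist (n₁ z) (n₂ z) : ℝ≥0∞)) + ε)
    (hr : ∀ x : X, (∑ z : {y : X // y ≠ x}, r x z.1) ≤ u)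
    (hu : u ≤ 1)
    {L : List X} (hL : ∀ x : X, x ∈ L)
    {c : ℝ≥0∞} (hc : u * c + ε ≤ c)
    (ν : PMF ((X → ℕ) × (X → ℕ))) (B : ℝ≥0∞) (hB : ∀ z, Adist z ν ≤ B)
    (n : ℕ) :
    ∀ z, Adist z (ν.bind (iterK C L n)) ≤ u ^ n * B + c := by
  induction n with
  | zero =>
    intro z
    rw [bind_iterK_zero, pow_zero, one_mul]
    exact (hB z).trans le_self_add
  | succ n ih =>
    have hstep : u * (u ^ n * B + c) + ε ≤ u ^ (n + 1) * B + c := by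
      calc u * (u ^ n * B + c) + ε = u ^ (n + 1) * B + (u * c + ε) := by ring
        _ ≤ u ^ (n + 1) * B + c := by gcongr
    have hmono : u ^ (n + 1) * B + c ≤ u ^ n * B + c :=
      add_le_add_left (mul_le_mul_left (pow_le_pow_of_le_one zero_le hu (Nat.le_succ n)) B) c
    obtain ⟨_, h2, _⟩ := sweep_contract hCc hr L (ν.bind (iterK C L n))
      (u ^ n * B + c) (hstep.trans hmono) ih
    intro z
    rw [bind_iterK_succ]
    exact (h2 z (hL z)).trans hstep
end

lemma pexp_sum {α ι : Type*} (ν : PMF α) (t : Finset ι) (f : ι → α → ℝ≥0∞) :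
    pexp ν (fun a => ∑ i ∈ t, f i a) = ∑ i ∈ t, pexp ν (f i) := by
  unfold pexp
  simp only [Finset.mul_sum]
  rw [Summable.tsum_finsetSum (fun _ _ => ENNReal.summable)]

lemma indep_map_fst {α β : Type*} (P : PMF α) (Q : PMF β) :
    ((P.bind fun a => Q.map fun b => (a, b)).map Prod.fst) = P := by
  rw [PMF.map_bind]
  simp [PMF.map_comp]

lemma indep_map_snd {α β : Type*} (P : PMF α) (Q : PMF β) :
    ((P.bind fun a => Q.map fun b => (a, b)).map Prod.snd) = Q := by
  rw [PMF.map_bind]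
  simp [PMF.map_comp]
  exact Q.map_id

lemma marg_gap {α : Type*} [DecidableEq α] (ν : PMF (α × α)) {μ₁ μ₂ : PMF α}
    (hf : ν.map Prod.fst = μ₁) (hs : ν.map Prod.snd = μ₂) (s : α) :
    μ₁ s ≤ μ₂ s + pexp ν (fun σ => if σ.1 = σ.2 then 0 else 1) := by
  rw [← hf, ← hs, PMF.map_apply, PMF.map_apply, pexp]
  rw [← Summable.tsum_add ENNReal.summable ENNReal.summable]
  refine ENNReal.tsum_le_tsum fun σ => ?_
  by_cases h1 : s = σ.1
  · rw [if_pos h1]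
    by_cases h2 : σ.1 = σ.2
    · rw [if_pos (h1.trans h2), if_pos h2]
      exact le_add_right le_rfl
    · rw [if_neg h2, mul_one]
      exact le_add_left le_rfl
  · rw [if_neg h1]
    exact zero_le

lemma geom_fix {u' : ℝ≥0} (hu : u' < 1) (e : ℝ≥0) :
    u' * (e / (1 - u')) + e = e / (1 - u') := by
  have ht : (1 : ℝ≥0) - u' ≠ 0 := (tsub_pos_of_lt hu).ne'
  have h1 : (1 - u') * (e / (1 - u')) = e := by
    rw [mul_comm]; exact div_mul_cancel₀ e ht
  calc u' * (e / (1 - u')) + e = u' * (e / (1 - u')) + (1 - u') * (e / (1 - u')) := by rw [h1]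
    _ = (u' + (1 - u')) * (e / (1 - u')) := (add_mul _ _ _).symm
    _ = e / (1 - u') := by rw [add_tsub_cancel_of_le hu.le, one_mul]

open Classical in
lemma key {X : Type*} [Fintype X] [DecidableEq X]
    (p : (x : X) → ({y : X // y ≠ x} → ℕ) → PMF ℕ)
    (r : X → X → ℝ≥0∞) (u : ℝ≥0∞) (hu : u < 1)
    (hrow : ∀ x, ∑ z : X, r x z ≤ u)
    (hcontr : ∀ (x : X) (n₁ n₂ : {y : X // y ≠ x} → ℕ),
      natVaserstein (p x n₁) (p x n₂) ≤
        ∑ z : {y : X // y ≠ x}, r x z.1 * (Nat.dist (n₁ z) (n₂ z) : ℝ≥0∞))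
    (μ₁ μ₂ : PMF (X → ℕ))
    (h₁ : IsGibbsField p μ₁) (h₂ : IsGibbsField p μ₂) (s : X → ℕ) :
    μ₁ s ≤ μ₂ s := by
  have hune : u ≠ ⊤ := ne_top_of_lt hu
  set u' : ℝ≥0 := u.toNNReal with hu'def
  have hucoe : (u' : ℝ≥0∞) = u := ENNReal.coe_toNNReal hune
  have hu1 : u' < 1 := ENNReal.coe_lt_one_iff.mp (hucoe ▸ hu)
  apply ENNReal.le_of_forall_pos_le_add
  intro δ hδ _
  set k := Fintype.card X with hk
  set δ3 : ℝ≥0 := δ / 3 with hδ3def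
  have hδ3 : δ3 ≠ 0 := by
    simp only [hδ3def]
    exact div_ne_zero hδ.ne' (by norm_num)
  set e : ℝ≥0 := δ3 * (1 - u') / (k + 1) with hedef
  have he : e ≠ 0 := by
    refine div_ne_zero (mul_ne_zero hδ3 (tsub_pos_of_lt hu1).ne') ?_
    positivity
  have hepos : (0 : ℝ≥0∞) < ↑e := ENNReal.coe_pos.mpr (pos_iff_ne_zero.mpr he)
  set c' : ℝ≥0 := e / (1 - u') with hc'def
  set c : ℝ≥0∞ := (c' : ℝ≥0∞) with hcdef
  have hc : u * c + ↑e ≤ c := by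
    rw [hcdef, ← hucoe, ← ENNReal.coe_mul, ← ENNReal.coe_add]
    exact le_of_eq (by exact_mod_cast geom_fix hu1 e)
  have hc'val : c' = δ3 / ((k : ℝ≥0) + 1) := by
    have ht : (1 : ℝ≥0) - u' ≠ 0 := (tsub_pos_of_lt hu1).ne'
    rw [hc'def, hedef, div_div, mul_comm ((k : ℝ≥0) + 1) (1 - u'), ← div_div,
      mul_div_assoc, div_self ht, mul_one]
  have hkc : (k : ℝ≥0∞) * c ≤ ↑δ3 := by
    rw [hcdef, hc'val, ← ENNReal.coe_natCast k, ← ENNReal.coe_mul, ENNReal.coe_le_coe]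
    calc (k : ℝ≥0) * (δ3 / (k + 1)) ≤ ((k : ℝ≥0) + 1) * (δ3 / (k + 1)) := by
          gcongr; exact le_self_add
      _ = δ3 := by rw [mul_comm, div_mul_cancel₀]; positivity
  -- choose couplings
  have hex : ∀ (x : X) (n₁ n₂ : {y : X // y ≠ x} → ℕ),
      ∃ Q : PMF (ℕ × ℕ), Q.map Prod.fst = p x n₁ ∧ Q.map Prod.snd = p x n₂ ∧
        ∑' mn : ℕ × ℕ, Q mn * (Nat.dist mn.1 mn.2 : ℝ≥0∞) ≤
          (∑ z : {y : X // y ≠ x}, r x z.1 * (Nat.dist (n₁ z) (n₂ z) : ℝ≥0∞)) + ↑e :=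
    fun x n₁ n₂ => exists_coupling _ _ _ (hcontr x n₁ n₂) ↑e hepos
  choose C hC1 hC2 hCc using hex
  -- row sums over subtypes
  have hsub : ∀ x : X, (∑ z : {y : X // y ≠ x}, r x z.1) ≤ u := by
    intro x
    refine le_trans (le_of_eq (Finset.sum_subtype (Finset.univ.filter (· ≠ x)) (by simp) (r x)).symm) ?_
    exact le_trans (Finset.sum_le_sum_of_subset (Finset.filter_subset _ _)) (hrow x)
  have hinv1 : ∀ x, μ₁.bind (heatBathX p x) = μ₁ := fun x => heatBathX_invariant p μ₁ h₁ x
  have hinv2 : ∀ x, μ₂.bind (heatBathX p x) = μ₂ := fun x => heatBathX_invariant p μ₂ h₂ x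
  set L : List X := Finset.univ.toList with hLdef
  have hL : ∀ x : X, x ∈ L := fun x => by simp [hLdef]
  set ν₀ : PMF ((X → ℕ) × (X → ℕ)) := μ₁.bind fun a => μ₂.map fun b => (a, b) with hν₀
  have hνf : ν₀.map Prod.fst = μ₁ := indep_map_fst μ₁ μ₂
  have hνs : ν₀.map Prod.snd = μ₂ := indep_map_snd μ₁ μ₂
  -- tail bound
  have hδ3pos : (0 : ℝ≥0∞) < ↑δ3 := ENNReal.coe_pos.mpr (pos_iff_ne_zero.mpr hδ3)
  obtain ⟨F, hF⟩ : ∃ F : Finset ((X → ℕ) × (X → ℕ)),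
      (∑' σ₀ : {σ // σ ∉ F}, ν₀ σ₀.1) ≤ ↑δ3 := by
    have ht := ENNReal.tendsto_tsum_compl_atTop_zero (f := fun σ => ν₀ σ)
      (by rw [ν₀.tsum_coe]; exact ENNReal.one_ne_top)
    obtain ⟨F, hF⟩ := (ht.eventually_lt_const hδ3pos).exists
    exact ⟨F, hF.le⟩
  set D : ((X → ℕ) × (X → ℕ)) → ℝ≥0∞ :=
    fun σ => ∑ x : X, (Nat.dist (σ.1 x) (σ.2 x) : ℝ≥0∞) with hD
  have hDne : ∀ σ, D σ ≠ ⊤ := fun σ =>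
    (ENNReal.sum_lt_top.mpr fun x _ => (ENNReal.natCast_ne_top _).lt_top).ne
  set DF : ℝ≥0∞ := (∑ σ₀ ∈ F, D σ₀) + 1 with hDF
  have hDFne : DF ≠ ⊤ := by
    rw [hDF]
    exact ENNReal.add_ne_top.mpr
      ⟨(ENNReal.sum_lt_top.mpr fun σ _ => (hDne σ).lt_top).ne, ENNReal.one_ne_top⟩
  have hDFle : ∀ σ₀ ∈ F, D σ₀ ≤ DF := fun σ₀ h =>
    (Finset.single_le_sum (fun _ _ => zero_le) h).trans le_self_add
  set M : ℝ≥0∞ := (k : ℝ≥0∞) * DF + 1 with hM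
  have hMne : M ≠ ⊤ := by
    rw [hM]
    exact ENNReal.add_ne_top.mpr
      ⟨ENNReal.mul_ne_top (ENNReal.natCast_ne_top _) hDFne, ENNReal.one_ne_top⟩
  -- choose n
  obtain ⟨n, hn⟩ : ∃ n : ℕ, u ^ n ≤ ↑δ3 / M := by
    have ht := ENNReal.tendsto_pow_atTop_nhds_zero_of_lt_one hu
    obtain ⟨n, hn⟩ := (ht.eventually_lt_const (ENNReal.div_pos hδ3pos.ne' hMne)).exists
    exact ⟨n, hn.le⟩
  set ν : PMF ((X → ℕ) × (X → ℕ)) := ν₀.bind (iterK C L n) with hν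
  have hmf : ν.map Prod.fst = μ₁ := bind_iterK_map_fst hC1 hinv1 L n hνf
  have hms : ν.map Prod.snd = μ₂ := bind_iterK_map_snd hC2 hinv2 L n hνs
  -- per-starting-point estimate
  set ind : ((X → ℕ) × (X → ℕ)) → ℝ≥0∞ := fun σ => if σ.1 = σ.2 then 0 else 1 with hind
  have hind_le_one : ∀ σ, ind σ ≤ 1 := by
    intro σ; simp only [hind]; split <;> simp
  have hind_le_D : ∀ σ, ind σ ≤ D σ := by
    intro σ
    simp only [hind, hD]
    split
    · exact zero_le
    · next hne =>
      have : ∃ x, σ.1 x ≠ σ.2 x := by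
        by_contra hcon
        push_neg at hcon
        exact hne (funext hcon)
      obtain ⟨x, hx⟩ := this
      have h1 : (1 : ℝ≥0∞) ≤ (Nat.dist (σ.1 x) (σ.2 x) : ℝ≥0∞) := by
        have : 1 ≤ Nat.dist (σ.1 x) (σ.2 x) := by
          rcases Nat.eq_zero_or_pos (Nat.dist (σ.1 x) (σ.2 x)) with h | h
          · exact absurd (Nat.eq_of_dist_eq_zero h) hx
          · exact h
        exact_mod_cast this
      exact h1.trans (Finset.single_le_sum (f := fun x : X => (Nat.dist (σ.1 x) (σ.2 x) : ℝ≥0∞))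
        (fun _ _ => zero_le) (Finset.mem_univ x))
  have hgF : ∀ σ₀ ∈ F, pexp (iterK C L n σ₀) ind ≤ ↑δ3 + ↑δ3 := by
    intro σ₀ hσ₀
    have hAz : ∀ z, Adist z (PMF.pure σ₀) ≤ D σ₀ := by
      intro z
      rw [Adist_pure]
      simp only [hD]
      exact Finset.single_le_sum (f := fun x : X => (Nat.dist (σ₀.1 x) (σ₀.2 x) : ℝ≥0∞))
        (fun _ _ => zero_le) (Finset.mem_univ z)
    have hiter := iter_contract hCc hsub (hucoe ▸ ENNReal.coe_le_one_iff.mpr hu1.le) hL hc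
      (PMF.pure σ₀) (D σ₀) hAz n
    have hpure : iterK C L n σ₀ = (PMF.pure σ₀).bind (iterK C L n) := (PMF.pure_bind σ₀ _).symm
    have hterm : (k : ℝ≥0∞) * (u ^ n * D σ₀) ≤ M * (↑δ3 / M) := by
      calc (k : ℝ≥0∞) * (u ^ n * D σ₀) = (k : ℝ≥0∞) * D σ₀ * u ^ n := by ring
        _ ≤ M * (↑δ3 / M) := by
            refine mul_le_mul ?_ hn (zero_le) (zero_le)
            rw [hM]
            exact le_trans (mul_le_mul_right (hDFle σ₀ hσ₀) _) le_self_add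
    calc pexp (iterK C L n σ₀) ind
        ≤ pexp (iterK C L n σ₀) D := pexp_mono _ hind_le_D
      _ = ∑ x : X, Adist x ((PMF.pure σ₀).bind (iterK C L n)) := by
          rw [hpure]
          simp only [hD]
          rw [pexp_sum]
          rfl
      _ ≤ ∑ _x : X, (u ^ n * D σ₀ + c) := Finset.sum_le_sum fun x _ => hiter x
      _ = (k : ℝ≥0∞) * (u ^ n * D σ₀ + c) := by
          rw [Finset.sum_const, Finset.card_univ, nsmul_eq_mul]
      _ = (k : ℝ≥0∞) * (u ^ n * D σ₀) + (k : ℝ≥0∞) * c := mul_add _ _ _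
      _ ≤ M * (↑δ3 / M) + ↑δ3 := add_le_add hterm hkc
      _ ≤ ↑δ3 + ↑δ3 := add_le_add_left ENNReal.mul_div_le _
  -- assemble
  have hmain : pexp ν ind ≤ ↑δ3 + ↑δ3 + ↑δ3 := by
    rw [hν, pexp_bind]
    rw [← Summable.tsum_add_tsum_compl (s := (F : Set ((X → ℕ) × (X → ℕ))))
      ENNReal.summable ENNReal.summable]
    have hpart1 : (∑' σ₀ : (F : Set ((X → ℕ) × (X → ℕ))),
        ν₀ σ₀.1 * pexp (iterK C L n σ₀.1) ind) ≤ ↑δ3 + ↑δ3 := by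
      calc (∑' σ₀ : (F : Set ((X → ℕ) × (X → ℕ))), ν₀ σ₀.1 * pexp (iterK C L n σ₀.1) ind)
          = ∑ σ₀ ∈ F, ν₀ σ₀ * pexp (iterK C L n σ₀) ind :=
            F.tsum_subtype fun σ₀ => ν₀ σ₀ * pexp (iterK C L n σ₀) ind
        _ ≤ ∑ σ₀ ∈ F, ν₀ σ₀ * (↑δ3 + ↑δ3) :=
            Finset.sum_le_sum fun σ₀ h => mul_le_mul_right (hgF σ₀ h) _
        _ = (∑ σ₀ ∈ F, ν₀ σ₀) * (↑δ3 + ↑δ3) := (Finset.sum_mul _ _ _).symm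
        _ ≤ 1 * (↑δ3 + ↑δ3) := by
            gcongr
            rw [← ν₀.tsum_coe]
            exact ENNReal.sum_le_tsum F
        _ = ↑δ3 + ↑δ3 := one_mul _
    have hpart2 : (∑' σ₀ : ↥(F : Set ((X → ℕ) × (X → ℕ)))ᶜ,
        ν₀ σ₀.1 * pexp (iterK C L n σ₀.1) ind) ≤ ↑δ3 := by
      calc (∑' σ₀ : ↥(F : Set ((X → ℕ) × (X → ℕ)))ᶜ, ν₀ σ₀.1 * pexp (iterK C L n σ₀.1) ind)
          ≤ ∑' σ₀ : ↥(F : Set ((X → ℕ) × (X → ℕ)))ᶜ, ν₀ σ₀.1 * 1 :=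
            ENNReal.tsum_le_tsum fun σ₀ =>
              mul_le_mul_right (pexp_le_one _ hind_le_one) _
        _ ≤ ↑δ3 := by
            simp only [mul_one]
            exact le_trans (le_of_eq (tsum_congr fun σ₀ => rfl)) hF
    exact add_le_add hpart1 hpart2
  have hsum : (↑δ3 + ↑δ3 + ↑δ3 : ℝ≥0∞) = ↑δ := by
    rw [← ENNReal.coe_add, ← ENNReal.coe_add, ENNReal.coe_inj]
    rw [hδ3def, ← add_div, ← add_div, show δ + δ + δ = 3 * δ by ring,
      mul_div_cancel_left₀]
    norm_num
  calc μ₁ s ≤ μ₂ s + pexp ν ind := by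
        have := marg_gap ν hmf hms s
        simpa [hind] using this
    _ ≤ μ₂ s + (↑δ3 + ↑δ3 + ↑δ3) := add_le_add_right hmain _
    _ = μ₂ s + ↑δ := by rw [hsum]

/-- Dobrushin uniqueness for finitely many sites: if the single-site Vaserstein
distances are contracted by a matrix `r` with row sums `≤ u < 1`, then there is
at most one Gibbs field with the given specification. -/
theorem dobrushin_uniqueness {X : Type*} [Fintype X] [DecidableEq X]
    (p : (x : X) → ({y : X // y ≠ x} → ℕ) → PMF ℕ)
    (r : X → X → ℝ≥0∞) (u : ℝ≥0∞) (hu : u < 1)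
    (hrow : ∀ x, ∑ z : X, r x z ≤ u)
    (hcontr : ∀ (x : X) (n₁ n₂ : {y : X // y ≠ x} → ℕ),
      natVaserstein (p x n₁) (p x n₂) ≤
        ∑ z : {y : X // y ≠ x}, r x z.1 * (Nat.dist (n₁ z) (n₂ z) : ℝ≥0∞))
    (μ₁ μ₂ : PMF (X → ℕ))
    (h₁ : IsGibbsField p μ₁) (h₂ : IsGibbsField p μ₂) :
    μ₁ = μ₂ := by
  ext s
  exact le_antisymm (key p r u hu hrow hcontr μ₁ μ₂ h₁ h₂ s)
    (key p r u hu hrow hcontr μ₂ μ₁ h₂ h₁ s)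
end
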